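/- Let A be a signed interaction matrix that is strongly connected and aperiodic. Then: (i) A induces a nontrivial polarization if and only if A is opposition bipartite; (ii) A is divergent if and only if A is reverse opposition bipartite; (iii) A induces a neutral consensus if and only if A is neither opposition bipartite nor reverse opposition bipartite. -/

import Mathlib

open Filter

variable {n : ℕ}

/-- Entrywise absolute value of a matrix. -/
def absMat (A : Matrix (Fin n) (Fin n) ℝ) : Matrix (Fin n) (Fin n) ℝ :=
  A.map fun x => |x|

/-- `A` is strongly connected: for all `i j` there is `k ≥ 1` with `(|A|^k)_{ij} > 0`. -/
def StronglyConnected (A : Matrix (Fin n) (Fin n) ℝ) : Prop :=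
  ∀ i j, ∃ k : ℕ, 1 ≤ k ∧ 0 < (absMat A ^ k) i j

/-- `A` is aperiodic: for each `i`, the gcd of `{k ≥ 1 : (|A|^k)_{ii} > 0}` is `1`,
phrased as: every common divisor of that set equals `1`. -/
def Aperiodic (A : Matrix (Fin n) (Fin n) ℝ) : Prop :=
  ∀ i, ∀ d : ℕ, (∀ k : ℕ, 1 ≤ k → 0 < (absMat A ^ k) i i → d ∣ k) → d = 1

/-- `A` is opposition bipartite: a two-set partition (given by `S` and its
complement) with nonnegative entries within sets and nonpositive across. -/
def OppBip (A : Matrix (Fin n) (Fin n) ℝ) : Prop :=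
  ∃ S : Set (Fin n), ∀ i j,
    (((i ∈ S ∧ j ∈ S) ∨ (i ∉ S ∧ j ∉ S)) → 0 ≤ A i j) ∧
    (((i ∈ S ∧ j ∉ S) ∨ (i ∉ S ∧ j ∈ S)) → A i j ≤ 0)

/-- `A` is reverse opposition bipartite: nonpositive entries within sets and
nonnegative across. -/
def RevOppBip (A : Matrix (Fin n) (Fin n) ℝ) : Prop :=
  ∃ S : Set (Fin n), ∀ i j,
    (((i ∈ S ∧ j ∈ S) ∨ (i ∉ S ∧ j ∉ S)) → A i j ≤ 0) ∧
    (((i ∈ S ∧ j ∉ S) ∨ (i ∉ S ∧ j ∈ S)) → 0 ≤ A i j)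

/-- `A` is divergent: some initial vector has no limit under iteration. -/
def Divergent (A : Matrix (Fin n) (Fin n) ℝ) : Prop :=
  ∃ b₀ : Fin n → ℝ, ¬ ∃ L : Fin n → ℝ,
    Tendsto (fun t => (A ^ t).mulVec b₀) atTop (nhds L)

/-- `A` induces a neutral consensus: iterates converge to `0` from every start. -/
def NeutralConsensus (A : Matrix (Fin n) (Fin n) ℝ) : Prop :=
  ∀ b₀ : Fin n → ℝ, Tendsto (fun t => (A ^ t).mulVec b₀) atTop (nhds 0)

/-- A vector is a polarization if its entries take at most two values. -/
def IsPolarization (p : Fin n → ℝ) : Prop :=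
  ∃ a b : ℝ, ∀ i, p i = a ∨ p i = b

/-- `A` induces a nontrivial polarization: from every start the limit exists
and is a polarization, and from some start the limit is nonzero. -/
def InducesNontrivialPolarization (A : Matrix (Fin n) (Fin n) ℝ) : Prop :=
  (∀ b₀ : Fin n → ℝ, ∃ L : Fin n → ℝ,
      Tendsto (fun t => (A ^ t).mulVec b₀) atTop (nhds L) ∧ IsPolarization L) ∧
  (∃ (b₀ L : Fin n → ℝ),
      Tendsto (fun t => (A ^ t).mulVec b₀) atTop (nhds L) ∧ L ≠ 0)

lemma absMat_pow_nonneg (A : Matrix (Fin n) (Fin n) ℝ) :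
    ∀ k i j, 0 ≤ (absMat A ^ k) i j := by
  intro k
  induction k with
  | zero => intro i j; simp [Matrix.one_apply]; split <;> norm_num
  | succ k ih =>
    intro i j
    rw [pow_succ, Matrix.mul_apply]
    exact Finset.sum_nonneg fun l _ => mul_nonneg (ih i l) (abs_nonneg _)

lemma exists_pos_of_sum_pos {s : Finset (Fin n)} {f : Fin n → ℝ}
    (h : 0 < ∑ i ∈ s, f i) : ∃ i ∈ s, 0 < f i := by
  by_contra hc
  push_neg at hc
  have : ∑ i ∈ s, f i ≤ 0 := Finset.sum_nonpos hc
  linarith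

lemma pow_pos_propagate (A : Matrix (Fin n) (Fin n) ℝ) (T : Fin n → Prop)
    (hT : ∀ i j, T i → 0 < absMat A i j → T j) :
    ∀ k i j, T i → 0 < (absMat A ^ k) i j → T j := by
  intro k
  induction k with
  | zero =>
    intro i j hi hpos
    rw [pow_zero] at hpos
    by_cases h : i = j
    · exact h ▸ hi
    · simp [Matrix.one_apply, h] at hpos
  | succ k ih =>
    intro i j hi hpos
    rw [pow_succ', Matrix.mul_apply] at hpos
    obtain ⟨l, _, hl⟩ := exists_pos_of_sum_pos hpos
    have h1 : 0 < absMat A i l := by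
      rcases lt_or_ge 0 (absMat A i l) with h | h
      · exact h
      · nlinarith [absMat_pow_nonneg A k l j]
    have h2 : 0 < (absMat A ^ k) l j := by
      nlinarith [abs_nonneg (A i l), absMat_pow_nonneg A k l j,
        (by simpa [absMat] using h1 : 0 < |A i l|)]
    exact ih l j (hT i l hi h1) h2

lemma sc_closure (A : Matrix (Fin n) (Fin n) ℝ) (hsc : StronglyConnected A)
    (T : Fin n → Prop) (hT : ∀ i j, T i → 0 < absMat A i j → T j)
    {i0 : Fin n} (h0 : T i0) : ∀ j, T j := by
  intro j
  obtain ⟨k, _, hk⟩ := hsc i0 j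
  exact pow_pos_propagate A T hT k i0 j h0 hk

lemma parity_invariant (A : Matrix (Fin n) (Fin n) ℝ) (t : Fin n → ℝ)
    (ht : ∀ i, t i = 1 ∨ t i = -1)
    (hflip : ∀ i j, 0 < absMat A i j → t i * t j = -1) :
    ∀ k i j, 0 < (absMat A ^ k) i j → t i * t j = (-1 : ℝ) ^ k := by
  intro k
  induction k with
  | zero =>
    intro i j hpos
    rw [pow_zero] at hpos
    by_cases h : i = j
    · subst h; rcases ht i with h | h <;> simp [h]
    · simp [Matrix.one_apply, h] at hpos
  | succ k ih =>
    intro i j hpos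
    rw [pow_succ', Matrix.mul_apply] at hpos
    obtain ⟨l, _, hl⟩ := exists_pos_of_sum_pos hpos
    have h1 : 0 < absMat A i l := by
      rcases lt_or_ge 0 (absMat A i l) with h | h
      · exact h
      · nlinarith [absMat_pow_nonneg A k l j]
    have h2 : 0 < (absMat A ^ k) l j := by
      nlinarith [(by simpa [absMat] using h1 : 0 < |A i l|)]
    have e1 := hflip i l h1
    have e2 := ih l j h2
    have hl2 : t l * t l = 1 := by rcases ht l with h | h <;> simp [h]
    have : t i * t j = (t i * t l) * (t l * t j) := by
      have : (t i * t l) * (t l * t j) = (t l * t l) * (t i * t j) := by ring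
      rw [this, hl2, one_mul]
    rw [pow_succ, this, e1, e2]; ring

lemma eig_bound (A : Matrix (Fin n) (Fin n) ℝ) (hrow : ∀ i, ∑ j, |A i j| = 1)
    (lam : ℝ) (v : Fin n → ℝ) (hv : v ≠ 0) (heig : A.mulVec v = lam • v) :
    |lam| ≤ 1 := by
  have hne : (Finset.univ : Finset (Fin n)).Nonempty := by
    rcases Function.ne_iff.mp hv with ⟨i, _⟩
    exact ⟨i, Finset.mem_univ i⟩
  obtain ⟨i0, -, hmax⟩ := Finset.exists_max_image Finset.univ (fun i => |v i|) hne
  have hm0 : 0 < |v i0| := by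
    rcases Function.ne_iff.mp hv with ⟨i, hi⟩
    have : 0 < |v i| := abs_pos.mpr (by simpa using hi)
    exact lt_of_lt_of_le this (hmax i (Finset.mem_univ i))
  have hvi : ∑ j, A i0 j * v j = lam * v i0 := by
    have := congrFun heig i0
    simpa [Matrix.mulVec, dotProduct] using this
  have hb : |lam| * |v i0| ≤ |v i0| := by
    calc |lam| * |v i0| = |∑ j, A i0 j * v j| := by rw [hvi, abs_mul]
    _ ≤ ∑ j, |A i0 j * v j| := Finset.abs_sum_le_sum_abs _ _
    _ ≤ ∑ j, |A i0 j| * |v i0| := by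
        refine Finset.sum_le_sum fun j _ => ?_
        rw [abs_mul]
        exact mul_le_mul_of_nonneg_left (hmax j (Finset.mem_univ j)) (abs_nonneg _)
    _ = |v i0| := by rw [← Finset.sum_mul, hrow i0, one_mul]
  nlinarith

lemma sign_eigenvector (A : Matrix (Fin n) (Fin n) ℝ)
    (hrow : ∀ i, ∑ j, |A i j| = 1) (hsc : StronglyConnected A)
    (eps : ℝ) (heps : eps = 1 ∨ eps = -1)
    (v : Fin n → ℝ) (hv : v ≠ 0) (heig : A.mulVec v = eps • v) :
    ∃ s : Fin n → ℝ, (∀ i, s i = 1 ∨ s i = -1) ∧ (∃ m : ℝ, 0 < m ∧ v = m • s) ∧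
      ∀ i j, A i j = eps * s i * s j * |A i j| := by
  have heps2 : eps * eps = 1 := by rcases heps with h | h <;> simp [h]
  have hepsabs : |eps| = 1 := by rcases heps with h | h <;> simp [h]
  have hne : (Finset.univ : Finset (Fin n)).Nonempty := by
    rcases Function.ne_iff.mp hv with ⟨i, _⟩
    exact ⟨i, Finset.mem_univ i⟩
  obtain ⟨i0, -, hmax⟩ := Finset.exists_max_image Finset.univ (fun i => |v i|) hne
  set m := |v i0| with hm
  have hmax' : ∀ j, |v j| ≤ m := fun j => hmax j (Finset.mem_univ j)
  have hm0 : 0 < m := by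
    rcases Function.ne_iff.mp hv with ⟨i, hi⟩
    exact lt_of_lt_of_le (abs_pos.mpr (by simpa using hi)) (hmax' i)
  -- pointwise step
  have step : ∀ i, |v i| = m → (∀ j, A i j ≠ 0 → |v j| = m) ∧
      (∀ j, (eps * v i) * (A i j * v j) = m * (|A i j| * |v j|)) := by
    intro i him
    have hvi : ∑ j, A i j * v j = eps * v i := by
      have := congrFun heig i
      simpa [Matrix.mulVec, dotProduct] using this
    have habs : ∑ j, |A i j| * |v j| = m := by
      have h1 : ∑ j, |A i j| * |v j| ≤ m := by
        calc ∑ j, |A i j| * |v j| ≤ ∑ j, |A i j| * m :=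
          Finset.sum_le_sum fun j _ => mul_le_mul_of_nonneg_left (hmax' j) (abs_nonneg _)
        _ = m := by rw [← Finset.sum_mul, hrow i, one_mul]
      have h2 : m ≤ ∑ j, |A i j| * |v j| := by
        calc m = |eps * v i| := by rw [abs_mul, hepsabs, one_mul, him]
        _ = |∑ j, A i j * v j| := by rw [hvi]
        _ ≤ ∑ j, |A i j * v j| := Finset.abs_sum_le_sum_abs _ _
        _ = ∑ j, |A i j| * |v j| := by simp [abs_mul]
      linarith
    constructor
    · intro j hAij
      have hz : ∑ j, |A i j| * (m - |v j|) = 0 := by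
        rw [Finset.sum_congr rfl (fun j _ => mul_sub (|A i j|) m (|v j|)),
          Finset.sum_sub_distrib, ← Finset.sum_mul, hrow i, one_mul, habs, sub_self]
      have hterm := (Finset.sum_eq_zero_iff_of_nonneg
        (fun j _ => mul_nonneg (abs_nonneg (A i j)) (by linarith [hmax' j]))).mp hz j
        (Finset.mem_univ j)
      have : |A i j| ≠ 0 := abs_ne_zero.mpr hAij
      have := mul_eq_zero.mp hterm
      rcases this with h | h
      · exact absurd h ‹|A i j| ≠ 0›
      · linarith
    · -- triangle equality per-term
      intro j
      have hsum : ∑ j, (eps * v i) * (A i j * v j) = m * m := by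
        have h3 : eps * v i * (eps * v i) = v i * v i := by
          have h4 : eps * v i * (eps * v i) = (eps * eps) * (v i * v i) := by ring
          rw [h4, heps2, one_mul]
        rw [← Finset.mul_sum, hvi, h3, ← abs_mul_abs_self (v i), him]
      have hsumabs : ∑ j, m * (|A i j| * |v j|) = m * m := by rw [← Finset.mul_sum, habs]
      have hle : ∀ j, (eps * v i) * (A i j * v j) ≤ m * (|A i j| * |v j|) := by
        intro j
        calc (eps * v i) * (A i j * v j) ≤ |(eps * v i) * (A i j * v j)| := le_abs_self _
        _ = m * (|A i j| * |v j|) := by rw [abs_mul, abs_mul, hepsabs, one_mul, him, abs_mul]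
      have hz : ∑ j, (m * (|A i j| * |v j|) - (eps * v i) * (A i j * v j)) = 0 := by
        rw [Finset.sum_sub_distrib, hsum, hsumabs, sub_self]
      have := (Finset.sum_eq_zero_iff_of_nonneg
        (fun j _ => by linarith [hle j])).mp hz j (Finset.mem_univ j)
      linarith
  -- propagate |v j| = m everywhere
  have hall : ∀ j, |v j| = m := by
    refine sc_closure A hsc (fun j => |v j| = m) (fun i j hi hij => ?_) (hm.symm)
    have hij' : A i j ≠ 0 := by
      intro h
      simp [absMat, h] at hij
    exact (step i hi).1 j hij'
  refine ⟨fun i => v i / m, fun i => ?_, ⟨m, hm0, ?_⟩, fun i j => ?_⟩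
  · rcases abs_eq (le_of_lt hm0) |>.mp (hall i) with h | h
    · left; show v i / m = 1; rw [h]; field_simp
    · right; show v i / m = -1; rw [h]; field_simp
  · funext i
    simp only [Pi.smul_apply, smul_eq_mul]
    field_simp
  · by_cases hAij : A i j = 0
    · simp [hAij]
    · have key := (step i (hall i)).2 j
      have hvj : |v j| = m := hall j
      -- key : (eps * v i) * (A i j * v j) = m * (|A i j| * m)
      rw [hvj] at key
      have hsisj : eps * (v i / m) * (v j / m) * A i j = |A i j| := by
        have hm2 : m * m ≠ 0 := by positivity
        field_simp
        nlinarith [key]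
      have hsi2 : (v i / m) * (v i / m) = 1 := by
        have : |v i / m| = 1 := by rw [abs_div, hall i, abs_of_pos hm0]; field_simp
        nlinarith [abs_mul_abs_self (v i / m)]
      have hsj2 : (v j / m) * (v j / m) = 1 := by
        have : |v j / m| = 1 := by rw [abs_div, hall j, abs_of_pos hm0]; field_simp
        nlinarith [abs_mul_abs_self (v j / m)]
      calc A i j = (eps*eps) * ((v i / m)*(v i / m)) * ((v j / m)*(v j / m)) * A i j := by
            rw [heps2, hsi2, hsj2]; ring
      _ = eps * (v i / m) * (v j / m) * (eps * (v i / m) * (v j / m) * A i j) := by ring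
      _ = eps * (v i / m) * (v j / m) * |A i j| := by rw [hsisj]

/-- Sign-relation form of (reverse) opposition bipartiteness. -/
def SignRel (A : Matrix (Fin n) (Fin n) ℝ) (eps : ℝ) (s : Fin n → ℝ) : Prop :=
  (∀ i, s i = 1 ∨ s i = -1) ∧ ∀ i j, A i j = eps * s i * s j * |A i j|

lemma oppBip_iff_signRel (A : Matrix (Fin n) (Fin n) ℝ) :
    OppBip A ↔ ∃ s, SignRel A 1 s := by
  constructor
  · rintro ⟨S, hS⟩
    classical
    refine ⟨fun i => if i ∈ S then 1 else -1,
      fun i => by by_cases h : i ∈ S <;> simp [h], fun i j => ?_⟩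
    by_cases hi : i ∈ S <;> by_cases hj : j ∈ S <;>
      simp only [hi, hj, if_true, if_neg, not_false_iff, one_mul, mul_one, mul_neg,
        neg_neg, neg_mul]
    · exact (abs_of_nonneg ((hS i j).1 (Or.inl ⟨hi, hj⟩))).symm
    · rw [abs_of_nonpos ((hS i j).2 (Or.inl ⟨hi, hj⟩))]; ring
    · rw [abs_of_nonpos ((hS i j).2 (Or.inr ⟨hi, hj⟩))]; ring
    · exact (abs_of_nonneg ((hS i j).1 (Or.inr ⟨hi, hj⟩))).symm
  · rintro ⟨s, hs, hrel⟩
    refine ⟨{i | s i = 1}, fun i j => ⟨fun h => ?_, fun h => ?_⟩⟩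
    · have : s i * s j = 1 := by
        rcases h with ⟨hi, hj⟩ | ⟨hi, hj⟩
        · rw [Set.mem_setOf_eq] at hi hj; rw [hi, hj]; norm_num
        · rw [Set.mem_setOf_eq] at hi hj
          rcases hs i with h1 | h1; · exact absurd h1 hi
          rcases hs j with h2 | h2; · exact absurd h2 hj
          rw [h1, h2]; norm_num
      rw [hrel i j]
      have : (1:ℝ) * s i * s j * |A i j| = (s i * s j) * |A i j| := by ring
      rw [this, ‹s i * s j = 1›, one_mul]
      exact abs_nonneg _
    · have : s i * s j = -1 := by
        rcases h with ⟨hi, hj⟩ | ⟨hi, hj⟩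
        · rw [Set.mem_setOf_eq] at hi hj
          rcases hs j with h2 | h2; · exact absurd h2 hj
          rw [hi, h2]; norm_num
        · rw [Set.mem_setOf_eq] at hi hj
          rcases hs i with h1 | h1; · exact absurd h1 hi
          rw [h1, hj]; norm_num
      rw [hrel i j]
      have h4 : (1:ℝ) * s i * s j * |A i j| = (s i * s j) * |A i j| := by ring
      rw [h4, ‹s i * s j = -1›]
      have := abs_nonneg (A i j)
      linarith
  
lemma revOppBip_iff_signRel (A : Matrix (Fin n) (Fin n) ℝ) :
    RevOppBip A ↔ ∃ s, SignRel A (-1) s := by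
  constructor
  · rintro ⟨S, hS⟩
    classical
    refine ⟨fun i => if i ∈ S then 1 else -1,
      fun i => by by_cases h : i ∈ S <;> simp [h], fun i j => ?_⟩
    by_cases hi : i ∈ S <;> by_cases hj : j ∈ S <;>
      simp only [hi, hj, if_true, if_neg, not_false_iff, one_mul, mul_one, mul_neg,
        neg_neg, neg_mul]
    · rw [abs_of_nonpos ((hS i j).1 (Or.inl ⟨hi, hj⟩))]; ring
    · exact (abs_of_nonneg ((hS i j).2 (Or.inl ⟨hi, hj⟩))).symm
    · exact (abs_of_nonneg ((hS i j).2 (Or.inr ⟨hi, hj⟩))).symm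
    · rw [abs_of_nonpos ((hS i j).1 (Or.inr ⟨hi, hj⟩))]; ring
  · rintro ⟨s, hs, hrel⟩
    refine ⟨{i | s i = 1}, fun i j => ⟨fun h => ?_, fun h => ?_⟩⟩
    · have hss : s i * s j = 1 := by
        rcases h with ⟨hi, hj⟩ | ⟨hi, hj⟩
        · rw [Set.mem_setOf_eq] at hi hj; rw [hi, hj]; norm_num
        · rw [Set.mem_setOf_eq] at hi hj
          rcases hs i with h1 | h1; · exact absurd h1 hi
          rcases hs j with h2 | h2; · exact absurd h2 hj
          rw [h1, h2]; norm_num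
      rw [hrel i j]
      have h4 : (-1:ℝ) * s i * s j * |A i j| = -((s i * s j) * |A i j|) := by ring
      rw [h4, hss, one_mul]
      have := abs_nonneg (A i j)
      linarith
    · have hss : s i * s j = -1 := by
        rcases h with ⟨hi, hj⟩ | ⟨hi, hj⟩
        · rw [Set.mem_setOf_eq] at hi hj
          rcases hs j with h2 | h2; · exact absurd h2 hj
          rw [hi, h2]; norm_num
        · rw [Set.mem_setOf_eq] at hi hj
          rcases hs i with h1 | h1; · exact absurd h1 hi
          rw [h1, hj]; norm_num
      rw [hrel i j]
      have h4 : (-1:ℝ) * s i * s j * |A i j| = -((s i * s j) * |A i j|) := by ring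
      rw [h4, hss]
      have := abs_nonneg (A i j)
      linarith

lemma signRel_mulVec (A : Matrix (Fin n) (Fin n) ℝ) (hrow : ∀ i, ∑ j, |A i j| = 1)
    (eps : ℝ) (s : Fin n → ℝ) (h : SignRel A eps s) :
    A.mulVec s = (eps * ·) ∘ s := by
  obtain ⟨hs, hrel⟩ := h
  funext i
  have : ∀ j, A i j * s j = eps * s i * |A i j| := by
    intro j
    have h2 : s j * s j = 1 := by rcases hs j with h | h <;> rw [h] <;> norm_num
    calc A i j * s j = (eps * s i * s j * |A i j|) * s j := by conv_lhs => rw [hrel i j]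
    _ = eps * s i * |A i j| * (s j * s j) := by ring
    _ = eps * s i * |A i j| := by rw [h2, mul_one]
  simp only [Matrix.mulVec, dotProduct, Function.comp_apply]
  rw [Finset.sum_congr rfl (fun j _ => this j)]
  rw [← Finset.mul_sum, hrow i, mul_one]

/-- Opposition bipartite and reverse opposition bipartite are mutually exclusive. -/
lemma not_both_bip (hn : 2 ≤ n) (A : Matrix (Fin n) (Fin n) ℝ)
    (hsc : StronglyConnected A) (hap : Aperiodic A)
    (h1 : OppBip A) (h2 : RevOppBip A) : False := by
  obtain ⟨s, hs, hrel⟩ := (oppBip_iff_signRel A).mp h1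
  obtain ⟨s', hs', hrel'⟩ := (revOppBip_iff_signRel A).mp h2
  set t : Fin n → ℝ := fun i => s i * s' i with ht
  have htpm : ∀ i, t i = 1 ∨ t i = -1 := by
    intro i
    rcases hs i with h | h <;> rcases hs' i with h' | h' <;> simp [ht, h, h']
  have hflip : ∀ i j, 0 < absMat A i j → t i * t j = -1 := by
    intro i j hij
    have hA : |A i j| ≠ 0 := by
      simp only [absMat, Matrix.map_apply] at hij
      linarith
    have e1 := hrel i j
    have e2 := hrel' i j
    have e3 : (1:ℝ) * s i * s j * |A i j| = -1 * s' i * s' j * |A i j| := e1.symm.trans e2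
    have key : s i * s j = -(s' i * s' j) :=
      mul_right_cancel₀ hA (by linear_combination e3)
    show s i * s' i * (s j * s' j) = -1
    rcases hs' i with h | h <;> rcases hs' j with h' | h' <;>
      rw [h, h'] at key ⊢ <;> nlinarith [key]
  have i0 : Fin n := ⟨0, by omega⟩
  have h2div : ∀ k : ℕ, 1 ≤ k → 0 < (absMat A ^ k) i0 i0 → 2 ∣ k := by
    intro k _ hk
    have := parity_invariant A t htpm hflip k i0 i0 hk
    have hti : t i0 * t i0 = 1 := by rcases htpm i0 with h | h <;> rw [h] <;> norm_num
    rw [hti] at this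
    have : Even k := by
      by_contra hodd
      rw [Nat.not_even_iff_odd] at hodd
      rw [Odd.neg_one_pow hodd] at this
      norm_num at this
    exact this.two_dvd
  have := hap i0 2 h2div
  norm_num at this

/-- Any fixed vector lies in the span of the sign vector. -/
lemma span_fixed (hn : 2 ≤ n) (A : Matrix (Fin n) (Fin n) ℝ)
    (hrow : ∀ i, ∑ j, |A i j| = 1) (hsc : StronglyConnected A)
    (s : Fin n → ℝ) (hS : SignRel A 1 s)
    (v : Fin n → ℝ) (hv : A.mulVec v = v)
    (hsign : ∀ w : Fin n → ℝ, w ≠ 0 → A.mulVec w = (1:ℝ) • w →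
      ∃ s' : Fin n → ℝ, (∀ i, s' i = 1 ∨ s' i = -1) ∧ (∃ m : ℝ, 0 < m ∧ w = m • s') ∧
        ∀ i j, A i j = 1 * s' i * s' j * |A i j|) :
    ∃ c : ℝ, v = c • s := by
  obtain ⟨hs, hrel⟩ := hS
  by_cases hv0 : v = 0
  · exact ⟨0, by simp [hv0]⟩
  · obtain ⟨s', hs', ⟨m, hm, hvm⟩, hrel'⟩ := hsign v hv0 (by simpa using hv)
    have i0 : Fin n := ⟨0, by omega⟩
    set t : Fin n → ℝ := fun i => s i * s' i with ht
    have hconst : ∀ j, t j = t i0 := by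
      refine sc_closure A hsc (fun j => t j = t i0) (fun i j hi hij => ?_) rfl
      have hA : |A i j| ≠ 0 := by
        simp only [absMat, Matrix.map_apply] at hij
        linarith
      have e3 : (1:ℝ) * s i * s j * |A i j| = 1 * s' i * s' j * |A i j| :=
        (hrel i j).symm.trans (hrel' i j)
      have key : s i * s j = s' i * s' j :=
        mul_right_cancel₀ hA (by linear_combination e3)
      have htji : t j = t i := by
        show s j * s' j = s i * s' i
        rcases hs i with h1 | h1 <;> rcases hs' i with h2 | h2 <;>
          rcases hs j with h3 | h3 <;> rcases hs' j with h4 | h4 <;>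
          rewrite [h1, h2, h3, h4] at key ⊢ <;> linarith
      show t j = t i0
      rw [htji]
      exact hi
    refine ⟨m * t i0, ?_⟩
    funext j
    have hsj : s j * s j = 1 := by rcases hs j with h | h <;> rw [h] <;> norm_num
    have : s' j = t i0 * s j := by
      rw [← hconst j, ht]
      calc s' j = (s j * s j) * s' j := by rw [hsj, one_mul]
      _ = s j * s' j * s j := by ring
    calc v j = m * s' j := by rw [hvm]; rfl
    _ = (m * t i0) * s j := by rw [this]; ring
    _ = ((m * t i0) • s) j := rfl

section Spectral
variable (A : Matrix (Fin n) (Fin n) ℝ) (hA : A.IsHermitian)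

/-- column of eigenvector unitary -/
noncomputable def eigCol (k : Fin n) : Fin n → ℝ := ⇑(hA.eigenvectorBasis k)

lemma eigCol_eig (k : Fin n) : A.mulVec (eigCol A hA k) = hA.eigenvalues k • eigCol A hA k :=
  hA.mulVec_eigenvectorBasis k

lemma eigCol_ne_zero (k : Fin n) : eigCol A hA k ≠ 0 := by
  intro h
  have h1 : hA.eigenvectorBasis k = 0 := by
    ext i
    exact congrFun h i
  exact hA.eigenvectorBasis.toBasis.ne_zero k (by
    rw [OrthonormalBasis.coe_toBasis, h1])

lemma specPowEq (t : ℕ) :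
    A ^ t = (hA.eigenvectorUnitary : Matrix (Fin n) (Fin n) ℝ) *
      Matrix.diagonal (fun k => hA.eigenvalues k ^ t) *
      (star (hA.eigenvectorUnitary : Matrix (Fin n) (Fin n) ℝ)) := by
  set U := (hA.eigenvectorUnitary : Matrix (Fin n) (Fin n) ℝ)
  have hUU : U * star U = 1 := Matrix.mem_unitaryGroup_iff.mp hA.eigenvectorUnitary.2
  have hspec : A = U * Matrix.diagonal hA.eigenvalues * star U := by
    have := hA.spectral_theorem
    simpa [RCLike.ofReal_real_eq_id] using this
  induction t with
  | zero =>
    have h1 : (fun k => hA.eigenvalues k ^ (0:ℕ)) = fun _ => (1:ℝ) := by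
      funext k; rw [pow_zero]
    rw [pow_zero, h1, Matrix.diagonal_one, Matrix.mul_one, hUU]
  | succ t ih =>
    rw [pow_succ, ih]
    have hstep : (U * Matrix.diagonal (fun k => hA.eigenvalues k ^ t)) * star U * A =
        (U * Matrix.diagonal (fun k => hA.eigenvalues k ^ t)) * star U *
          (U * Matrix.diagonal hA.eigenvalues * star U) := by rw [← hspec]
    rw [hstep]
    calc U * Matrix.diagonal (fun k => hA.eigenvalues k ^ t) * star U *
          (U * Matrix.diagonal hA.eigenvalues * star U)
        = U * Matrix.diagonal (fun k => hA.eigenvalues k ^ t) * (star U * U) *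
            Matrix.diagonal hA.eigenvalues * star U := by
          simp only [Matrix.mul_assoc]
    _ = U * (Matrix.diagonal (fun k => hA.eigenvalues k ^ t) *
            Matrix.diagonal hA.eigenvalues) * star U := by
          rw [Matrix.mem_unitaryGroup_iff'.mp hA.eigenvectorUnitary.2]
          simp only [Matrix.mul_assoc, Matrix.one_mul]
    _ = _ := by
          rw [Matrix.diagonal_mul_diagonal]
          have h2 : (fun k => hA.eigenvalues k ^ t * hA.eigenvalues k)
              = fun k => hA.eigenvalues k ^ (t+1) := by
            funext k; rw [pow_succ]
          rw [h2]

lemma specPowMulVec (t : ℕ) (b : Fin n → ℝ) (i : Fin n) :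
    ((A ^ t).mulVec b) i = ∑ k, hA.eigenvalues k ^ t *
      ((star (hA.eigenvectorUnitary : Matrix (Fin n) (Fin n) ℝ)).mulVec b k) *
      (hA.eigenvectorUnitary : Matrix (Fin n) (Fin n) ℝ) i k := by
  set U := (hA.eigenvectorUnitary : Matrix (Fin n) (Fin n) ℝ) with hU
  set cc := (star U).mulVec b with hcc
  rw [specPowEq A hA t, ← Matrix.mulVec_mulVec, ← Matrix.mulVec_mulVec]
  have h1 : (U.mulVec ((Matrix.diagonal (fun k => hA.eigenvalues k ^ t)).mulVec cc)) i
      = ∑ k, U i k * ((Matrix.diagonal (fun k => hA.eigenvalues k ^ t)).mulVec cc) k := rfl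
  rw [h1]
  refine Finset.sum_congr rfl fun k _ => ?_
  rw [Matrix.mulVec_diagonal]
  ring

/-- Convergence when all eigenvalues are in (-1,1]. -/
lemma specConv (hgood : ∀ k, |hA.eigenvalues k| < 1 ∨ hA.eigenvalues k = 1) (b : Fin n → ℝ) :
    Tendsto (fun t => (A ^ t).mulVec b) atTop (nhds (fun i =>
      ∑ k, (if hA.eigenvalues k = 1 then 1 else 0) *
        ((star (hA.eigenvectorUnitary : Matrix (Fin n) (Fin n) ℝ)).mulVec b k) *
        (hA.eigenvectorUnitary : Matrix (Fin n) (Fin n) ℝ) i k)) := by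
  rw [tendsto_pi_nhds]
  intro i
  have : ∀ t, ((A ^ t).mulVec b) i = ∑ k, hA.eigenvalues k ^ t *
      ((star (hA.eigenvectorUnitary : Matrix (Fin n) (Fin n) ℝ)).mulVec b k) *
      (hA.eigenvectorUnitary : Matrix (Fin n) (Fin n) ℝ) i k := fun t => specPowMulVec A hA t b i
  simp only [this]
  apply tendsto_finset_sum
  intro k _
  rcases hgood k with h | h
  · have h0 : Tendsto (fun t : ℕ => hA.eigenvalues k ^ t) atTop (nhds 0) :=
      tendsto_pow_atTop_nhds_zero_of_abs_lt_one h
    have heq : (if hA.eigenvalues k = 1 then (1:ℝ) else 0) = 0 := by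
      rw [if_neg]; intro he; rw [he] at h; norm_num at h
    rw [heq]
    have := h0.mul_const (((star (hA.eigenvectorUnitary : Matrix (Fin n) (Fin n) ℝ)).mulVec b k) *
      (hA.eigenvectorUnitary : Matrix (Fin n) (Fin n) ℝ) i k)
    simpa [mul_assoc] using this
  · rw [h, if_pos rfl]
    simp only [one_pow]
    exact tendsto_const_nhds
end Spectral

lemma isHermitian_of_isSymm (A : Matrix (Fin n) (Fin n) ℝ) (hsym : A.IsSymm) :
    A.IsHermitian := by
  rw [Matrix.IsHermitian, Matrix.conjTranspose_eq_transpose_of_trivial]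
  exact hsym

/-- Case 1: opposition bipartite gives nontrivial polarization. -/
lemma case_opp (hn : 2 ≤ n) (A : Matrix (Fin n) (Fin n) ℝ)
    (hsym : A.IsSymm) (hrow : ∀ i, ∑ j, |A i j| = 1)
    (hsc : StronglyConnected A) (hap : Aperiodic A) (hOpp : OppBip A) :
    InducesNontrivialPolarization A := by
  have hA : A.IsHermitian := isHermitian_of_isSymm A hsym
  obtain ⟨s, hsr⟩ := (oppBip_iff_signRel A).mp hOpp
  have hs := hsr.1
  have hAs : A.mulVec s = s := by
    have := signRel_mulVec A hrow 1 s hsr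
    funext i
    rw [this]
    simp
  have hgood : ∀ k, |hA.eigenvalues k| < 1 ∨ hA.eigenvalues k = 1 := by
    intro k
    have hb := eig_bound A hrow (hA.eigenvalues k) (eigCol A hA k) (eigCol_ne_zero A hA k)
      (eigCol_eig A hA k)
    rcases lt_or_eq_of_le hb with h | h
    · exact Or.inl h
    · rcases abs_eq (by norm_num : (0:ℝ) ≤ 1) |>.mp h with h1 | h1
      · exact Or.inr h1
      · exfalso
        have heig : A.mulVec (eigCol A hA k) = (-1 : ℝ) • eigCol A hA k := by
          rw [eigCol_eig A hA k, h1]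
        obtain ⟨s', hs1, _, hrel'⟩ := sign_eigenvector A hrow hsc (-1) (Or.inr rfl)
          (eigCol A hA k) (eigCol_ne_zero A hA k) heig
        exact not_both_bip hn A hsc hap hOpp
          ((revOppBip_iff_signRel A).mpr ⟨s', hs1, hrel'⟩)
  have hspan : ∀ k, ∃ c : ℝ, hA.eigenvalues k = 1 → eigCol A hA k = c • s := by
    intro k
    by_cases h : hA.eigenvalues k = 1
    · obtain ⟨c, hc⟩ := span_fixed hn A hrow hsc s hsr (eigCol A hA k)
        (by rw [eigCol_eig A hA k, h, one_smul])
        (fun w hw hwe => sign_eigenvector A hrow hsc 1 (Or.inl rfl) w hw (by simpa using hwe))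
      exact ⟨c, fun _ => hc⟩
    · exact ⟨0, fun h' => absurd h' h⟩
  choose α hα using hspan
  constructor
  · intro b
    refine ⟨_, specConv A hA hgood b, ?_⟩
    set γ := ∑ k, ((if hA.eigenvalues k = 1 then 1 else 0) *
        ((star (hA.eigenvectorUnitary : Matrix (Fin n) (Fin n) ℝ)).mulVec b k) * α k) with hγ
    refine ⟨γ, -γ, fun i => ?_⟩
    have hLi : (∑ k, (if hA.eigenvalues k = 1 then 1 else 0) *
        ((star (hA.eigenvectorUnitary : Matrix (Fin n) (Fin n) ℝ)).mulVec b k) *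
        (hA.eigenvectorUnitary : Matrix (Fin n) (Fin n) ℝ) i k) = γ * s i := by
      rw [hγ, Finset.sum_mul]
      refine Finset.sum_congr rfl fun k _ => ?_
      by_cases h : hA.eigenvalues k = 1
      · have hc : (hA.eigenvectorUnitary : Matrix (Fin n) (Fin n) ℝ) i k = α k * s i := by
          have h2 := hα k h
          have : eigCol A hA k i = (α k • s) i := by rw [h2]
          simpa [eigCol, Matrix.IsHermitian.eigenvectorUnitary_apply] using this
        rw [hc, if_pos h]
        ring
      · rw [if_neg h]
        ring
    rcases hs i with h | h
    · left; exact hLi.trans (by rw [h, mul_one])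
    · right; exact hLi.trans (by rw [h]; ring)
  · have i0 : Fin n := ⟨0, by omega⟩
    have hconst : ∀ t, (A ^ t).mulVec s = s := by
      intro t
      induction t with
      | zero => rw [pow_zero, Matrix.one_mulVec]
      | succ t ih => rw [pow_succ', ← Matrix.mulVec_mulVec, ih, hAs]
    refine ⟨s, s, ?_, ?_⟩
    · simp only [hconst]
      exact tendsto_const_nhds
    · intro h0
      have := congrFun h0 i0
      rcases hs i0 with h | h <;> rw [h] at this <;> norm_num at this

/-- Case 2: reverse opposition bipartite gives a non-convergent trajectory. -/
lemma case_rev (hn : 2 ≤ n) (A : Matrix (Fin n) (Fin n) ℝ)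
    (hrow : ∀ i, ∑ j, |A i j| = 1) (hRev : RevOppBip A) :
    ∃ b₀ : Fin n → ℝ, ¬ ∃ L : Fin n → ℝ,
      Tendsto (fun t => (A ^ t).mulVec b₀) atTop (nhds L) := by
  obtain ⟨s, hsr⟩ := (revOppBip_iff_signRel A).mp hRev
  have hs := hsr.1
  have hAs : A.mulVec s = -s := by
    have := signRel_mulVec A hrow (-1) s hsr
    funext i
    rw [this]
    simp
  have hpow : ∀ t, (A ^ t).mulVec s = ((-1:ℝ) ^ t) • s := by
    intro t
    induction t with
    | zero => rw [pow_zero, Matrix.one_mulVec, pow_zero, one_smul]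
    | succ t ih =>
      rw [pow_succ', ← Matrix.mulVec_mulVec, ih, Matrix.mulVec_smul, hAs, pow_succ]
      funext i
      simp only [Pi.smul_apply, Pi.neg_apply, smul_eq_mul]
      ring
  have i0 : Fin n := ⟨0, by omega⟩
  refine ⟨s, ?_⟩
  rintro ⟨L, hL⟩
  have hLi : Tendsto (fun t => ((A ^ t).mulVec s) i0) atTop (nhds (L i0)) :=
    (tendsto_pi_nhds.mp hL) i0
  have hLi' : Tendsto (fun t => ((-1:ℝ) ^ t) * s i0) atTop (nhds (L i0)) := by
    have : ∀ t, ((A ^ t).mulVec s) i0 = ((-1:ℝ) ^ t) * s i0 := by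
      intro t; rw [hpow t]; rfl
    simpa only [this] using hLi
  have h2t : Tendsto (fun t : ℕ => 2 * t) atTop atTop :=
    tendsto_atTop_mono (fun t => by simp only [id_eq]; omega) tendsto_id
  have h2t1 : Tendsto (fun t : ℕ => 2 * t + 1) atTop atTop :=
    tendsto_atTop_mono (fun t => by simp only [id_eq]; omega) tendsto_id
  have heven : Tendsto (fun t : ℕ => ((-1:ℝ) ^ (2 * t)) * s i0) atTop (nhds (L i0)) :=
    hLi'.comp h2t
  have hodd : Tendsto (fun t : ℕ => ((-1:ℝ) ^ (2 * t + 1)) * s i0) atTop (nhds (L i0)) :=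
    hLi'.comp h2t1
  have he : (fun t : ℕ => ((-1:ℝ) ^ (2 * t)) * s i0) = fun _ => s i0 := by
    funext t; rw [pow_mul]; norm_num
  have ho : (fun t : ℕ => ((-1:ℝ) ^ (2 * t + 1)) * s i0) = fun _ => -s i0 := by
    funext t; rw [pow_succ, pow_mul]; norm_num
  rw [he] at heven
  rw [ho] at hodd
  have h1 : L i0 = s i0 := tendsto_nhds_unique heven tendsto_const_nhds
  have h2 : L i0 = -s i0 := tendsto_nhds_unique hodd tendsto_const_nhds
  rcases hs i0 with h | h <;> rw [h] at h1 h2 <;> rw [h1] at h2 <;> norm_num at h2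

/-- Case 3: neither implies neutral consensus. -/
lemma case_neither (hn : 2 ≤ n) (A : Matrix (Fin n) (Fin n) ℝ)
    (hsym : A.IsSymm) (hrow : ∀ i, ∑ j, |A i j| = 1)
    (hsc : StronglyConnected A) (hOpp : ¬ OppBip A) (hRev : ¬ RevOppBip A) :
    NeutralConsensus A := by
  have hA : A.IsHermitian := isHermitian_of_isSymm A hsym
  have hgood : ∀ k, |hA.eigenvalues k| < 1 := by
    intro k
    have hb := eig_bound A hrow (hA.eigenvalues k) (eigCol A hA k) (eigCol_ne_zero A hA k)
      (eigCol_eig A hA k)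
    rcases lt_or_eq_of_le hb with h | h
    · exact h
    · exfalso
      rcases abs_eq (by norm_num : (0:ℝ) ≤ 1) |>.mp h with h1 | h1
      · have heig : A.mulVec (eigCol A hA k) = (1 : ℝ) • eigCol A hA k := by
          rw [eigCol_eig A hA k, h1]
        obtain ⟨s', hs1, _, hrel'⟩ := sign_eigenvector A hrow hsc 1 (Or.inl rfl)
          (eigCol A hA k) (eigCol_ne_zero A hA k) heig
        exact hOpp ((oppBip_iff_signRel A).mpr ⟨s', hs1, hrel'⟩)
      · have heig : A.mulVec (eigCol A hA k) = (-1 : ℝ) • eigCol A hA k := by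
          rw [eigCol_eig A hA k, h1]
        obtain ⟨s', hs1, _, hrel'⟩ := sign_eigenvector A hrow hsc (-1) (Or.inr rfl)
          (eigCol A hA k) (eigCol_ne_zero A hA k) heig
        exact hRev ((revOppBip_iff_signRel A).mpr ⟨s', hs1, hrel'⟩)
  intro b
  have hc := specConv A hA (fun k => Or.inl (hgood k)) b
  have hzero : (fun i => ∑ k, (if hA.eigenvalues k = 1 then 1 else 0) *
      ((star (hA.eigenvectorUnitary : Matrix (Fin n) (Fin n) ℝ)).mulVec b k) *
      (hA.eigenvectorUnitary : Matrix (Fin n) (Fin n) ℝ) i k) = (0 : Fin n → ℝ) := by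
    funext i
    refine Finset.sum_eq_zero fun k _ => ?_
    have : hA.eigenvalues k ≠ 1 := by
      intro hk
      have := hgood k
      rw [hk] at this
      norm_num at this
    rw [if_neg this]
    ring
  rw [hzero] at hc
  exact hc


theorem stmt_9 (n : ℕ) (hn : 2 ≤ n) (A : Matrix (Fin n) (Fin n) ℝ)
    (hsym : A.IsSymm) (hdiag : ∀ i, A i i = 0) (hrow : ∀ i, ∑ j, |A i j| = 1)
    (hsc : StronglyConnected A) (hap : Aperiodic A) :
    (InducesNontrivialPolarization A ↔ OppBip A) ∧
    (Divergent A ↔ RevOppBip A) ∧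
    (NeutralConsensus A ↔ (¬ OppBip A ∧ ¬ RevOppBip A)) := by
  by_cases hO : OppBip A
  · have hR : ¬ RevOppBip A := fun h => not_both_bip hn A hsc hap hO h
    have hNP := case_opp hn A hsym hrow hsc hap hO
    refine ⟨⟨fun _ => hO, fun _ => hNP⟩, ⟨?_, fun h => absurd h hR⟩,
      ⟨?_, fun h => absurd hO h.1⟩⟩
    · rintro ⟨b₀, hb⟩
      exfalso
      obtain ⟨L, hL, _⟩ := hNP.1 b₀
      exact hb ⟨L, hL⟩
    · intro hN
      exfalso
      obtain ⟨b₀, L, hL, hLne⟩ := hNP.2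
      exact hLne (tendsto_nhds_unique hL (hN b₀))
  · by_cases hR : RevOppBip A
    · obtain ⟨b₀, hb⟩ := case_rev hn A hrow hR
      refine ⟨⟨?_, fun h => absurd h hO⟩, ⟨fun _ => hR, fun _ => ⟨b₀, hb⟩⟩,
        ⟨?_, fun h => absurd hR h.2⟩⟩
      · intro hNP
        exfalso
        obtain ⟨L, hL, _⟩ := hNP.1 b₀
        exact hb ⟨L, hL⟩
      · intro hN
        exfalso
        exact hb ⟨0, hN b₀⟩
    · have hN := case_neither hn A hsym hrow hsc hO hR
      refine ⟨⟨?_, fun h => absurd h hO⟩, ⟨?_, fun h => absurd h hR⟩,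
        ⟨fun _ => ⟨hO, hR⟩, fun _ => hN⟩⟩
      · intro hNP
        exfalso
        obtain ⟨b₀, L, hL, hLne⟩ := hNP.2
        exact hLne (tendsto_nhds_unique hL (hN b₀))
      · rintro ⟨b₀, hb⟩
        exfalso
        exact hb ⟨0, hN b₀⟩
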